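/- arXiv:1904.02773 — 6 statements merged into one kernel-verified Lean document; each statement's English description precedes it below -/
import Mathlib

section
/- Let H be a real Hilbert space, m > 0, and let f, g : H → ℝ be differentiable and m-strongly convex, with points w_f*, w_g* ∈ H satisfying ∇f(w_f*) = 0 and ∇g(w_g*) = 0. Then ‖w_f* − w_g*‖ ≤ (1/m)‖∇f(w_g*) − ∇g(w_g*)‖. -/
/-- For differentiable `m`-strongly convex `f, g` with critical points
`w_f*, w_g*`, one has `‖w_f* − w_g*‖ ≤ (1/m)‖∇f(w_g*) − ∇g(w_g*)‖`. -/
theorem minimizer_change_le_gradient_difference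
    {H : Type*} [NormedAddCommGroup H] [InnerProductSpace ℝ H] [CompleteSpace H]
    (m : ℝ) (hm : 0 < m) (f g : H → ℝ) (f' g' : H → H)
    (hgradf : ∀ x, HasGradientAt f (f' x) x)
    (hgradg : ∀ x, HasGradientAt g (g' x) x)
    (hscf : ∀ x y : H, f x + (inner ℝ (f' x) (y - x) : ℝ) + (m / 2) * ‖y - x‖ ^ 2 ≤ f y)
    (hscg : ∀ x y : H, g x + (inner ℝ (g' x) (y - x) : ℝ) + (m / 2) * ‖y - x‖ ^ 2 ≤ g y)
    (wf wg : H) (hminf : f' wf = 0) (hming : g' wg = 0) :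
    ‖wf - wg‖ ≤ (1 / m) * ‖f' wg - g' wg‖ := by
  have h1 := hscf wf wg
  have h2 := hscf wg wf
  rw [hminf, inner_zero_left] at h1
  have hnorm : ‖wg - wf‖ = ‖wf - wg‖ := by rw [← norm_neg, neg_sub]
  have key : m * ‖wf - wg‖ ^ 2 ≤ (inner ℝ (f' wg) (wg - wf) : ℝ) := by
    have : (inner ℝ (f' wg) (wf - wg) : ℝ) = - inner ℝ (f' wg) (wg - wf) := by
      rw [← inner_neg_right, neg_sub]
    rw [this] at h2
    rw [hnorm] at h1
    nlinarith
  have key2 : (inner ℝ (f' wg) (wg - wf) : ℝ) = inner ℝ (f' wg - g' wg) (wg - wf) := by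
    rw [hming, sub_zero]
  have cs : (inner ℝ (f' wg - g' wg) (wg - wf) : ℝ) ≤ ‖f' wg - g' wg‖ * ‖wf - wg‖ := by
    calc (inner ℝ (f' wg - g' wg) (wg - wf) : ℝ) ≤ ‖f' wg - g' wg‖ * ‖wg - wf‖ :=
          real_inner_le_norm _ _
      _ = ‖f' wg - g' wg‖ * ‖wf - wg‖ := by rw [hnorm]
  have hle : m * ‖wf - wg‖ ^ 2 ≤ ‖f' wg - g' wg‖ * ‖wf - wg‖ := by
    rw [key2] at key; linarith
  rcases eq_or_lt_of_le (norm_nonneg (wf - wg)) with h0 | h0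
  · rw [← h0]
    positivity
  · rw [← sub_nonneg]
    have : 0 ≤ (1 / m * ‖f' wg - g' wg‖ - ‖wf - wg‖) * (m * ‖wf - wg‖) := by
      have : (1 / m * ‖f' wg - g' wg‖ - ‖wf - wg‖) * (m * ‖wf - wg‖)
          = ‖f' wg - g' wg‖ * ‖wf - wg‖ - m * ‖wf - wg‖ ^ 2 := by
        field_simp
      rw [this]; linarith
    have hpos : 0 < m * ‖wf - wg‖ := by positivity
    exact nonneg_of_mul_nonneg_right (by linarith [this] : (0:ℝ) ≤ m * ‖wf - wg‖ * (1 / m * ‖f' wg - g' wg‖ - ‖wf - wg‖)) hpos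
end

section
/- Let H be a real Hilbert space, m > 0, T ≥ 2 a natural number, and for each n = 2, …, T+1 let f_n : H → ℝ be differentiable and m-strongly convex with a point w_n* ∈ H satisfying ∇f_n(w_n*) = 0. Suppose there are nonnegative reals S_n (n = 2, …, T) with ‖∇f_{n+1}(w) − ∇f_n(w)‖ ≤ S_n for all w ∈ H, and suppose Σ_{n=2}^{T} S_n² ≤ G_b. Then Σ_{n=2}^{T} ‖w_{n+1}* − w_n*‖² ≤ G_b / m². -/
/-- If each `f_n` (n = 2, …, T+1) is differentiable, `m`-strongly convex with
critical point `w_n*`, and the gradient variations are uniformly bounded by `S_n` with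
`Σ_{n=2}^T S_n² ≤ G_b`, then `Σ_{n=2}^T ‖w_{n+1}* − w_n*‖² ≤ G_b/m²`. -/
theorem total_minimizer_variation_le_gradient_variation
    {H : Type*} [NormedAddCommGroup H] [InnerProductSpace ℝ H] [CompleteSpace H]
    (m : ℝ) (hm : 0 < m) (T : ℕ) (hT : 2 ≤ T)
    (f : ℕ → H → ℝ) (f' : ℕ → H → H) (wstar : ℕ → H)
    (hgrad : ∀ n, 2 ≤ n → n ≤ T + 1 → ∀ x, HasGradientAt (f n) (f' n x) x)
    (hsc : ∀ n, 2 ≤ n → n ≤ T + 1 → ∀ x y : H,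
      f n x + (inner ℝ (f' n x) (y - x) : ℝ) + (m / 2) * ‖y - x‖ ^ 2 ≤ f n y)
    (hmin : ∀ n, 2 ≤ n → n ≤ T + 1 → f' n (wstar n) = 0)
    (S : ℕ → ℝ) (hS : ∀ n, 2 ≤ n → n ≤ T → 0 ≤ S n)
    (hvar : ∀ n, 2 ≤ n → n ≤ T → ∀ w : H, ‖f' (n + 1) w - f' n w‖ ≤ S n)
    (Gb : ℝ) (hGb : ∑ n ∈ Finset.Icc 2 T, (S n) ^ 2 ≤ Gb) :
    ∑ n ∈ Finset.Icc 2 T, ‖wstar (n + 1) - wstar n‖ ^ 2 ≤ Gb / m ^ 2 := by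
  have key : ∀ n ∈ Finset.Icc 2 T, ‖wstar (n + 1) - wstar n‖ ^ 2 ≤ S n ^ 2 / m ^ 2 := by
    intro n hn
    rw [Finset.mem_Icc] at hn
    obtain ⟨h2, hTn⟩ := hn
    set a := wstar n with ha
    set b := wstar (n + 1) with hb
    have h2' : 2 ≤ n + 1 := by omega
    have hT1 : n + 1 ≤ T + 1 := by omega
    have h1 := hsc (n + 1) h2' hT1 b a
    have h2'' := hsc (n + 1) h2' hT1 a b
    have hz : f' (n + 1) b = 0 := hmin (n + 1) h2' hT1
    have hzn : f' n a = 0 := hmin n h2 (by omega)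
    rw [hz, inner_zero_left] at h1
    have hnorm : ‖a - b‖ = ‖b - a‖ := norm_sub_rev a b
    rw [hnorm] at h1
    set g := f' (n + 1) a with hg
    have hineq : m * ‖b - a‖ ^ 2 ≤ (inner ℝ (-g) (b - a) : ℝ) := by
      rw [inner_neg_left]
      linarith [h1, h2'']
    have hgb : ‖g‖ ≤ S n := by
      have := hvar n h2 hTn a
      rwa [hzn, sub_zero] at this
    have hcs : (inner ℝ (-g) (b - a) : ℝ) ≤ ‖g‖ * ‖b - a‖ := by
      calc (inner ℝ (-g) (b - a) : ℝ) ≤ ‖-g‖ * ‖b - a‖ := real_inner_le_norm _ _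
        _ = ‖g‖ * ‖b - a‖ := by rw [norm_neg]
    have hx : 0 ≤ ‖b - a‖ := norm_nonneg _
    have hm2 : m * ‖b - a‖ ^ 2 ≤ S n * ‖b - a‖ := by
      calc m * ‖b - a‖ ^ 2 ≤ ‖g‖ * ‖b - a‖ := hineq.trans hcs
        _ ≤ S n * ‖b - a‖ := by
          exact mul_le_mul_of_nonneg_right hgb hx
    rw [le_div_iff₀ (by positivity)]
    nlinarith [sq_nonneg (m * ‖b - a‖ - S n), hS n h2 hTn, sq_nonneg ‖b - a‖, mul_le_mul_of_nonneg_left hm2 hm.le]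
  calc ∑ n ∈ Finset.Icc 2 T, ‖wstar (n + 1) - wstar n‖ ^ 2
      ≤ ∑ n ∈ Finset.Icc 2 T, S n ^ 2 / m ^ 2 := Finset.sum_le_sum key
    _ = (∑ n ∈ Finset.Icc 2 T, S n ^ 2) / m ^ 2 := by rw [Finset.sum_div]
    _ ≤ Gb / m ^ 2 := by gcongr
end

section
/- Let H be a real Hilbert space, m > 0, ε ≥ 0, ρ ≥ 0, and let f : H → ℝ be differentiable and m-strongly convex with w* ∈ H satisfying ∇f(w*) = 0. Let (Ω, F, P) be a probability space and W : Ω → H a random variable such that f(W) is integrable, ‖W − w*‖² and ‖W − w'‖² are integrable, and E[f(W)] − f(w*) ≤ ε. Then for any point w' ∈ H with ‖w' − w*‖ ≤ ρ, one has E[‖W − w'‖²] ≤ (√(2ε/m) + ρ)². -/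
open MeasureTheory

/-- Tracking bound. If `f` is `m`-strongly convex with `∇f(w*) = 0`,
`E[f(W)] − f(w*) ≤ ε`, and `‖w' − w*‖ ≤ ρ`, then `E[‖W − w'‖²] ≤ (√(2ε/m) + ρ)²`. -/
theorem tracking_bound_expected_sq_distance
    {H : Type*} [NormedAddCommGroup H] [InnerProductSpace ℝ H] [CompleteSpace H]
    (m ε ρ : ℝ) (hm : 0 < m) (hε : 0 ≤ ε) (hρ : 0 ≤ ρ)
    (f : H → ℝ) (f' : H → H)
    (hgrad : ∀ x, HasGradientAt f (f' x) x)
    (hsc : ∀ x y : H, f x + (inner ℝ (f' x) (y - x) : ℝ) + (m / 2) * ‖y - x‖ ^ 2 ≤ f y)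
    (wstar : H) (hmin : f' wstar = 0)
    {Ω : Type*} [MeasurableSpace Ω] (P : Measure Ω) [IsProbabilityMeasure P]
    (W : Ω → H) (hWmeas : AEStronglyMeasurable W P)
    (hfW : Integrable (fun ω => f (W ω)) P)
    (w' : H)
    (hdistsq : Integrable (fun ω => ‖W ω - wstar‖ ^ 2) P)
    (hdistsq' : Integrable (fun ω => ‖W ω - w'‖ ^ 2) P)
    (hexcess : ∫ ω, f (W ω) ∂P - f wstar ≤ ε)
    (hclose : ‖w' - wstar‖ ≤ ρ) :
    ∫ ω, ‖W ω - w'‖ ^ 2 ∂P ≤ (Real.sqrt (2 * ε / m) + ρ) ^ 2 := by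
  set X : Ω → ℝ := fun ω => ‖W ω - wstar‖ with hXdef
  have hXmeas : AEStronglyMeasurable X P :=
    (hWmeas.sub aestronglyMeasurable_const).norm
  have hX2 : MemLp X 2 P := (memLp_two_iff_integrable_sq hXmeas).2 hdistsq
  have hXint : Integrable X P := hX2.integrable one_le_two
  -- Step 1: pointwise strong convexity bound at wstar
  have hpt : ∀ ω, (m / 2) * X ω ^ 2 ≤ f (W ω) - f wstar := by
    intro ω
    have := hsc wstar (W ω)
    simp only [hmin, inner_zero_left] at this
    simp only [hXdef]; linarith
  -- Step 2: E[X²] ≤ 2ε/m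
  have hEX2 : ∫ ω, X ω ^ 2 ∂P ≤ 2 * ε / m := by
    have h1 : ∫ ω, (m / 2) * X ω ^ 2 ∂P ≤ ∫ ω, (f (W ω) - f wstar) ∂P :=
      integral_mono (hdistsq.const_mul _) (hfW.sub (integrable_const _)) (fun ω => hpt ω)
    rw [integral_const_mul] at h1
    rw [integral_sub hfW (integrable_const _)] at h1
    simp only [integral_const, measure_univ, probReal_univ, ENNReal.toReal_one, smul_eq_mul, one_mul] at h1
    have h2 : (m / 2) * ∫ ω, X ω ^ 2 ∂P ≤ ε := le_trans h1 hexcess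
    rw [le_div_iff₀ hm]
    nlinarith
  -- Step 3: E[X] ≤ √(2ε/m)
  have hEXnn : 0 ≤ ∫ ω, X ω ∂P := integral_nonneg (fun ω => norm_nonneg _)
  have hvar : (∫ ω, X ω ∂P) ^ 2 ≤ ∫ ω, X ω ^ 2 ∂P := by
    have h := ProbabilityTheory.variance_nonneg X P
    rw [ProbabilityTheory.variance_eq_sub hX2] at h
    simpa using h
  have hEX : ∫ ω, X ω ∂P ≤ Real.sqrt (2 * ε / m) := by
    have := Real.sqrt_le_sqrt (le_trans hvar hEX2)
    rwa [Real.sqrt_sq hEXnn] at this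
  -- Step 4: pointwise triangle inequality bound
  have hpt2 : ∀ ω, ‖W ω - w'‖ ^ 2 ≤ X ω ^ 2 + 2 * ρ * X ω + ρ ^ 2 := by
    intro ω
    have htri : ‖W ω - w'‖ ≤ X ω + ρ := by
      calc ‖W ω - w'‖ = ‖(W ω - wstar) + (wstar - w')‖ := by
            rw [sub_add_sub_cancel]
        _ ≤ ‖W ω - wstar‖ + ‖wstar - w'‖ := norm_add_le _ _
        _ ≤ X ω + ρ := add_le_add le_rfl (by rw [norm_sub_rev]; exact hclose)
    have h := mul_self_le_mul_self (norm_nonneg _) htri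
    nlinarith [norm_nonneg (W ω - wstar)]
  have hA : Integrable (fun ω => X ω ^ 2 + 2 * ρ * X ω) P := by
    exact hdistsq.add (hXint.const_mul _)
  have hmono : ∫ ω, ‖W ω - w'‖ ^ 2 ∂P ≤ ∫ ω, (X ω ^ 2 + 2 * ρ * X ω + ρ ^ 2) ∂P :=
    integral_mono hdistsq' (hA.add (integrable_const _)) hpt2
  rw [integral_add hA (integrable_const _),
      integral_add hdistsq (hXint.const_mul _), integral_const_mul, integral_const] at hmono
  simp only [measure_univ, probReal_univ, ENNReal.toReal_one, one_smul] at hmono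
  have hs : Real.sqrt (2 * ε / m) ^ 2 = 2 * ε / m := Real.sq_sqrt (by positivity)
  nlinarith [Real.sqrt_nonneg (2 * ε / m)]
end

section
/- Let H be a real Hilbert space, m > 0, and let f, g : H → ℝ be differentiable and m-strongly convex, with w_f*, w_g* ∈ H satisfying ∇f(w_f*) = 0 and ∇g(w_g*) = 0. For any points u, v ∈ H and any vectors G_u, G_v ∈ H, define the one-step change estimate ρ̃ = ‖u − v‖ + (1/m)‖G_u‖ + (1/m)‖G_v‖. Then ρ̃ − ‖w_f* − w_g*‖ ≤ (2/m)‖∇f(u)‖ + (2/m)‖∇g(v)‖ + (1/m)‖∇f(u) − G_u‖ + (1/m)‖∇g(v) − G_v‖. -/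
lemma sc_dist_bound {H : Type*} [NormedAddCommGroup H] [InnerProductSpace ℝ H]
    (m : ℝ) (hm : 0 < m) (f : H → ℝ) (f' : H → H)
    (hscf : ∀ x y : H, f x + (inner ℝ (f' x) (y - x) : ℝ) + (m / 2) * ‖y - x‖ ^ 2 ≤ f y)
    (wf : H) (hminf : f' wf = 0) (u : H) :
    m * ‖u - wf‖ ≤ ‖f' u‖ := by
  have h1 := hscf u wf
  have h2 := hscf wf u
  rw [hminf, inner_zero_left] at h2
  have hsum : (inner ℝ (f' u) (wf - u) : ℝ) + m * ‖u - wf‖ ^ 2 ≤ 0 := by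
    rw [norm_sub_rev wf u] at h1
    linarith
  have hcs : (inner ℝ (f' u) (u - wf) : ℝ) ≤ ‖f' u‖ * ‖u - wf‖ :=
    real_inner_le_norm _ _
  have hflip : (inner ℝ (f' u) (wf - u) : ℝ) = -(inner ℝ (f' u) (u - wf) : ℝ) := by
    rw [← inner_neg_right, neg_sub]
  rcases eq_or_lt_of_le (norm_nonneg (u - wf)) with h | h
  · nlinarith [norm_nonneg (f' u)]
  · nlinarith [hsum, hcs]

/-- Overshoot of the direct estimate
`ρ̃ = ‖u − v‖ + (1/m)‖G_u‖ + (1/m)‖G_v‖` above the true change `‖w_f* − w_g*‖` is bounded by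
`(2/m)‖∇f(u)‖ + (2/m)‖∇g(v)‖ + (1/m)‖∇f(u) − G_u‖ + (1/m)‖∇g(v) − G_v‖`. -/
theorem direct_estimate_overshoot_bound
    {H : Type*} [NormedAddCommGroup H] [InnerProductSpace ℝ H] [CompleteSpace H]
    (m : ℝ) (hm : 0 < m) (f g : H → ℝ) (f' g' : H → H)
    (hgradf : ∀ x, HasGradientAt f (f' x) x)
    (hgradg : ∀ x, HasGradientAt g (g' x) x)
    (hscf : ∀ x y : H, f x + (inner ℝ (f' x) (y - x) : ℝ) + (m / 2) * ‖y - x‖ ^ 2 ≤ f y)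
    (hscg : ∀ x y : H, g x + (inner ℝ (g' x) (y - x) : ℝ) + (m / 2) * ‖y - x‖ ^ 2 ≤ g y)
    (wf wg : H) (hminf : f' wf = 0) (hming : g' wg = 0)
    (u v Gu Gv : H) :
    (‖u - v‖ + (1 / m) * ‖Gu‖ + (1 / m) * ‖Gv‖) - ‖wf - wg‖ ≤
      (2 / m) * ‖f' u‖ + (2 / m) * ‖g' v‖ +
        (1 / m) * ‖f' u - Gu‖ + (1 / m) * ‖g' v - Gv‖ := by
  have hf := sc_dist_bound m hm f f' hscf wf hminf u
  have hg := sc_dist_bound m hm g g' hscg wg hming v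
  have htri : ‖u - v‖ ≤ ‖u - wf‖ + ‖wf - wg‖ + ‖wg - v‖ := by
    calc ‖u - v‖ = ‖(u - wf) + (wf - wg) + (wg - v)‖ := by abel_nf
    _ ≤ ‖u - wf‖ + ‖wf - wg‖ + ‖wg - v‖ := norm_add₃_le
  have hGu : ‖Gu‖ ≤ ‖f' u‖ + ‖f' u - Gu‖ := by
    calc ‖Gu‖ = ‖f' u - (f' u - Gu)‖ := by rw [sub_sub_cancel]
    _ ≤ ‖f' u‖ + ‖f' u - Gu‖ := norm_sub_le _ _
  have hGv : ‖Gv‖ ≤ ‖g' v‖ + ‖g' v - Gv‖ := by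
    calc ‖Gv‖ = ‖g' v - (g' v - Gv)‖ := by rw [sub_sub_cancel]
    _ ≤ ‖g' v‖ + ‖g' v - Gv‖ := norm_sub_le _ _
  have hwv : ‖wg - v‖ = ‖v - wg‖ := norm_sub_rev _ _
  have him : 0 < 1 / m := by positivity
  rw [hwv] at htri
  have h1 : ‖u - wf‖ ≤ (1/m) * ‖f' u‖ := by
    have := mul_le_mul_of_nonneg_left hf him.le
    rw [← mul_assoc, one_div, inv_mul_cancel₀ hm.ne', one_mul] at this
    rw [one_div]; exact this
  have h2 : ‖v - wg‖ ≤ (1/m) * ‖g' v‖ := by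
    have := mul_le_mul_of_nonneg_left hg him.le
    rw [← mul_assoc, one_div, inv_mul_cancel₀ hm.ne', one_mul] at this
    rw [one_div]; exact this
  have hGu' : (1/m) * ‖Gu‖ ≤ (1/m) * ‖f' u‖ + (1/m) * ‖f' u - Gu‖ := by nlinarith
  have hGv' : (1/m) * ‖Gv‖ ≤ (1/m) * ‖g' v‖ + (1/m) * ‖g' v - Gv‖ := by nlinarith
  have : (2:ℝ)/m = 1/m + 1/m := by ring
  rw [this]
  linarith
end

section
/- Let H be a real Hilbert space, m > 0, M > 0, ε₁, ε₂ ≥ 0, D₁, D₂ ≥ 0, and let f, g : H → ℝ be differentiable, m-strongly convex, with M-Lipschitz gradients, and w_f*, w_g* ∈ H with ∇f(w_f*) = 0, ∇g(w_g*) = 0. Let (Ω, F, P) be a probability space and U, V : Ω → H and G_U, G_V : Ω → H random variables (with all the quantities below integrable) such that E[f(U)] − f(w_f*) ≤ ε₁, E[g(V)] − g(w_g*) ≤ ε₂, E[‖∇f(U) − G_U‖] ≤ D₁, and E[‖∇g(V) − G_V‖] ≤ D₂. Then E[‖U − V‖ + (1/m)‖G_U‖ + (1/m)‖G_V‖] −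 ‖w_f* − w_g*‖ ≤ (2√2 · M / m^{3/2})(√ε₁ + √ε₂) + (1/m)(D₁ + D₂). -/
open MeasureTheory


theorem sq_integral_le_aux {Ω : Type*} [MeasurableSpace Ω] (P : Measure Ω)
    [IsProbabilityMeasure P] (φ : Ω → ℝ) (hφ : Integrable φ P)
    (hφ2 : Integrable (fun ω => φ ω ^ 2) P) :
    (∫ ω, φ ω ∂P) ^ 2 ≤ ∫ ω, φ ω ^ 2 ∂P := by
  set c := ∫ ω, φ ω ∂P with hc
  have h0 : 0 ≤ ∫ ω, (φ ω - c) ^ 2 ∂P := integral_nonneg fun ω => sq_nonneg _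
  have heq : (fun ω => (φ ω - c) ^ 2) = fun ω => (φ ω ^ 2 - 2 * c * φ ω) + c ^ 2 :=
    funext fun ω => by ring
  have hint1 : Integrable (fun ω => φ ω ^ 2 - 2 * c * φ ω) P :=
    hφ2.sub (hφ.const_mul (2 * c))
  have hint2 : Integrable (fun ω => 2 * c * φ ω) P := hφ.const_mul (2 * c)
  rw [heq, integral_add hint1 (integrable_const (c ^ 2)),
    integral_sub hφ2 hint2, MeasureTheory.integral_const_mul, integral_const,
    probReal_univ] at h0
  simp only [ENNReal.toReal_one, smul_eq_mul, one_mul, ← hc] at h0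
  nlinarith [h0]

theorem aux_bound {H : Type*} [NormedAddCommGroup H] [InnerProductSpace ℝ H]
    (m M ε : ℝ) (hm : 0 < m) (hM : 0 < M) (hε : 0 ≤ ε)
    (f : H → ℝ) (f' : H → H)
    (hscf : ∀ x y : H, f x + (inner ℝ (f' x) (y - x) : ℝ) + (m / 2) * ‖y - x‖ ^ 2 ≤ f y)
    (hlipf : ∀ x y : H, ‖f' x - f' y‖ ≤ M * ‖x - y‖)
    (w : H) (hminf : f' w = 0)
    {Ω : Type*} [MeasurableSpace Ω] (P : Measure Ω) [IsProbabilityMeasure P]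
    (U : Ω → H)
    (hfU : Integrable (fun ω => f (U ω)) P)
    (hgradU : Integrable (fun ω => ‖f' (U ω)‖) P)
    (hexcess : ∫ ω, f (U ω) ∂P - f w ≤ ε) :
    ∃ φ : Ω → ℝ, Integrable φ P ∧ (∀ ω, 0 ≤ φ ω) ∧ (∀ ω, ‖U ω - w‖ ≤ φ ω) ∧
      (∀ ω, ‖f' (U ω)‖ ≤ M * φ ω) ∧
      ∫ ω, φ ω ∂P ≤ Real.sqrt 2 / Real.sqrt m * Real.sqrt ε := by
  have hquad : ∀ y : H, (m / 2) * ‖y - w‖ ^ 2 ≤ f y - f w := by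
    intro y
    have h := hscf w y
    rw [hminf] at h
    simp only [inner_zero_left] at h
    linarith
  have hnn : ∀ y : H, 0 ≤ f y - f w := fun y => le_trans (by positivity) (hquad y)
  have hub : ∀ y : H, f y - f w ≤ ‖f' y‖ ^ 2 / (2 * m) := by
    intro y
    have h := hscf y w
    have hcs : -(‖f' y‖ * ‖w - y‖) ≤ (inner ℝ (f' y) (w - y) : ℝ) :=
      (abs_le.mp (abs_real_inner_le_norm _ _)).1
    have h5 : f y - f w ≤ ‖f' y‖ * ‖w - y‖ - m / 2 * ‖w - y‖ ^ 2 := by linarith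
    rw [le_div_iff₀ (by positivity : (0:ℝ) < 2 * m)]
    nlinarith [sq_nonneg (‖f' y‖ - m * ‖w - y‖), h5, hm, sq_nonneg (‖w - y‖)]
  set φ : Ω → ℝ := fun ω => Real.sqrt ((2 / m) * (f (U ω) - f w)) with hφdef
  have hφnn : ∀ ω, 0 ≤ φ ω := fun ω => Real.sqrt_nonneg _
  have hφsq : ∀ ω, φ ω ^ 2 = (2 / m) * (f (U ω) - f w) := fun ω =>
    Real.sq_sqrt (mul_nonneg (by positivity) (hnn _))
  -- ‖U ω - w‖ ≤ φ ω
  have hUw : ∀ ω, ‖U ω - w‖ ≤ φ ω := by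
    intro ω
    have hkey : ‖U ω - w‖ ^ 2 ≤ 2 / m * (f (U ω) - f w) := by
      have h := hquad (U ω)
      have h3 := mul_le_mul_of_nonneg_left h (by positivity : (0:ℝ) ≤ 2 / m)
      have h2 : (2 / m) * ((m / 2) * ‖U ω - w‖ ^ 2) = ‖U ω - w‖ ^ 2 := by
        field_simp
      linarith [h2 ▸ h3]
    exact (Real.le_sqrt (norm_nonneg _) (mul_nonneg (by positivity) (hnn _))).mpr hkey
  -- gradient bound
  have hfub : ∀ ω, ‖f' (U ω)‖ ≤ M * φ ω := by
    intro ω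
    have h := hlipf (U ω) w
    rw [hminf, sub_zero] at h
    exact h.trans (mul_le_mul_of_nonneg_left (hUw ω) hM.le)
  -- φ ≤ ‖f' (U ω)‖ / m
  have hφle : ∀ ω, φ ω ≤ ‖f' (U ω)‖ / m := by
    intro ω
    have h1 : (2 / m) * (f (U ω) - f w) ≤ (‖f' (U ω)‖ / m) ^ 2 := by
      have h3 := mul_le_mul_of_nonneg_left (hub (U ω)) (by positivity : (0:ℝ) ≤ 2 / m)
      have h2 : (2 / m) * (‖f' (U ω)‖ ^ 2 / (2 * m)) = (‖f' (U ω)‖ / m) ^ 2 := by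
        field_simp
      linarith [h2 ▸ h3]
    calc φ ω ≤ Real.sqrt ((‖f' (U ω)‖ / m) ^ 2) := Real.sqrt_le_sqrt h1
      _ = ‖f' (U ω)‖ / m := Real.sqrt_sq (by positivity)
  -- integrability
  have haesm : AEStronglyMeasurable φ P := by
    have hcont : Continuous fun t : ℝ => Real.sqrt ((2 / m) * (t - f w)) := by
      exact Real.continuous_sqrt.comp (continuous_const.mul (continuous_id.sub continuous_const))
    exact hcont.comp_aestronglyMeasurable hfU.1
  have hφint : Integrable φ P := by
    refine Integrable.mono' (hgradU.div_const m) haesm ?_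
    filter_upwards with ω
    rw [Real.norm_eq_abs, abs_of_nonneg (hφnn ω)]
    exact hφle ω
  have hφ2int : Integrable (fun ω => φ ω ^ 2) P :=
    (((hfU.sub (integrable_const (f w))).const_mul (2 / m)).congr
      (Filter.Eventually.of_forall fun ω => (hφsq ω).symm))
  -- Jensen
  have hJ := sq_integral_le_aux P φ hφint hφ2int
  have hintsq : ∫ ω, φ ω ^ 2 ∂P = (2 / m) * (∫ ω, f (U ω) ∂P - f w) := by
    rw [integral_congr_ae (Filter.Eventually.of_forall fun ω => hφsq ω),
      MeasureTheory.integral_const_mul,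
      integral_sub hfU (integrable_const (f w)), integral_const, probReal_univ]
    simp
  have hc0 : 0 ≤ ∫ ω, φ ω ∂P := integral_nonneg hφnn
  have hsq : (∫ ω, φ ω ∂P) ^ 2 ≤ (2 / m) * ε := by
    calc (∫ ω, φ ω ∂P) ^ 2 ≤ ∫ ω, φ ω ^ 2 ∂P := hJ
      _ = (2 / m) * (∫ ω, f (U ω) ∂P - f w) := hintsq
      _ ≤ (2 / m) * ε := mul_le_mul_of_nonneg_left hexcess (by positivity)
  refine ⟨φ, hφint, hφnn, hUw, hfub, ?_⟩
  calc ∫ ω, φ ω ∂P ≤ Real.sqrt ((2 / m) * ε) :=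
        (Real.le_sqrt hc0 (by positivity)).mpr hsq
    _ = Real.sqrt 2 / Real.sqrt m * Real.sqrt ε := by
        rw [Real.sqrt_mul (by positivity), Real.sqrt_div (by norm_num)]


set_option maxHeartbeats 1000000 in
/-- Expected overshoot of the direct estimate
`‖U − V‖ + (1/m)‖G_U‖ + (1/m)‖G_V‖` above the true change `‖w_f* − w_g*‖` is bounded by
`(2√2·M/m^{3/2})(√ε₁ + √ε₂) + (1/m)(D₁ + D₂)`. -/
theorem expected_direct_estimate_overshoot
    {H : Type*} [NormedAddCommGroup H] [InnerProductSpace ℝ H] [CompleteSpace H]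
    (m M ε₁ ε₂ D₁ D₂ : ℝ) (hm : 0 < m) (hM : 0 < M)
    (hε₁ : 0 ≤ ε₁) (hε₂ : 0 ≤ ε₂) (hD₁ : 0 ≤ D₁) (hD₂ : 0 ≤ D₂)
    (f g : H → ℝ) (f' g' : H → H)
    (hgradf : ∀ x, HasGradientAt f (f' x) x)
    (hgradg : ∀ x, HasGradientAt g (g' x) x)
    (hscf : ∀ x y : H, f x + (inner ℝ (f' x) (y - x) : ℝ) + (m / 2) * ‖y - x‖ ^ 2 ≤ f y)
    (hscg : ∀ x y : H, g x + (inner ℝ (g' x) (y - x) : ℝ) + (m / 2) * ‖y - x‖ ^ 2 ≤ g y)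
    (hlipf : ∀ x y : H, ‖f' x - f' y‖ ≤ M * ‖x - y‖)
    (hlipg : ∀ x y : H, ‖g' x - g' y‖ ≤ M * ‖x - y‖)
    (wf wg : H) (hminf : f' wf = 0) (hming : g' wg = 0)
    {Ω : Type*} [MeasurableSpace Ω] (P : Measure Ω) [IsProbabilityMeasure P]
    (U V GU GV : Ω → H)
    (hfU : Integrable (fun ω => f (U ω)) P)
    (hgV : Integrable (fun ω => g (V ω)) P)
    (hUV : Integrable (fun ω => ‖U ω - V ω‖) P)
    (hGU : Integrable (fun ω => ‖GU ω‖) P)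
    (hGV : Integrable (fun ω => ‖GV ω‖) P)
    (hgradU : Integrable (fun ω => ‖f' (U ω)‖) P)
    (hgradV : Integrable (fun ω => ‖g' (V ω)‖) P)
    (hdiffU : Integrable (fun ω => ‖f' (U ω) - GU ω‖) P)
    (hdiffV : Integrable (fun ω => ‖g' (V ω) - GV ω‖) P)
    (hexcessU : ∫ ω, f (U ω) ∂P - f wf ≤ ε₁)
    (hexcessV : ∫ ω, g (V ω) ∂P - g wg ≤ ε₂)
    (happroxU : ∫ ω, ‖f' (U ω) - GU ω‖ ∂P ≤ D₁)
    (happroxV : ∫ ω, ‖g' (V ω) - GV ω‖ ∂P ≤ D₂) :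
    ∫ ω, (‖U ω - V ω‖ + (1 / m) * ‖GU ω‖ + (1 / m) * ‖GV ω‖) ∂P - ‖wf - wg‖ ≤
      (2 * Real.sqrt 2 * M / m ^ ((3 : ℝ) / 2)) * (Real.sqrt ε₁ + Real.sqrt ε₂) +
        (1 / m) * (D₁ + D₂) := by
  have hrpos : 0 < m ^ ((3 : ℝ) / 2) := Real.rpow_pos_of_pos hm _
  by_cases hsub : Subsingleton H
  · have hz : ∀ x : H, ‖x‖ = 0 := fun x => by
      rw [Subsingleton.elim x (0 : H)]; exact norm_zero
    have h0 : (∫ ω, (‖U ω - V ω‖ + (1 / m) * ‖GU ω‖ + (1 / m) * ‖GV ω‖) ∂P) = 0 := by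
      have heq : (fun ω => ‖U ω - V ω‖ + (1 / m) * ‖GU ω‖ + (1 / m) * ‖GV ω‖)
          = fun _ : Ω => (0 : ℝ) := funext fun ω => by rw [hz, hz, hz]; ring
      rw [heq, integral_zero]
    rw [h0, hz (wf - wg)]
    have : (0:ℝ) - 0 = 0 := by ring
    rw [this]
    positivity
  · rw [not_subsingleton_iff_nontrivial] at hsub
    obtain ⟨x, hx⟩ := exists_ne (0 : H)
    have hxn : 0 < ‖x‖ := norm_pos_iff.mpr hx
    -- m ≤ M
    have hmM : m ≤ M := by
      have h1 := hscf 0 x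
      have h2 := hscf x 0
      simp only [sub_zero, zero_sub, inner_neg_right, norm_neg] at h1 h2
      have hcs : (inner ℝ (f' x - f' 0) x : ℝ) ≤ ‖f' x - f' 0‖ * ‖x‖ :=
        real_inner_le_norm _ _
      rw [inner_sub_left] at hcs
      have hlip := hlipf x 0
      rw [sub_zero] at hlip
      have hstep : m * ‖x‖ ^ 2 ≤ M * ‖x‖ * ‖x‖ := by
        nlinarith [mul_le_mul_of_nonneg_right hlip (norm_nonneg x)]
      have hx2 : 0 < ‖x‖ ^ 2 := by positivity
      nlinarith [hstep, hx2]
    obtain ⟨φU, hφUint, hφUnn, hUwf, hfUb, hφUbd⟩ :=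
      aux_bound m M ε₁ hm hM hε₁ f f' hscf hlipf wf hminf P U hfU hgradU hexcessU
    obtain ⟨φV, hφVint, hφVnn, hVwg, hgVb, hφVbd⟩ :=
      aux_bound m M ε₂ hm hM hε₂ g g' hscg hlipg wg hming P V hgV hgradV hexcessV
    -- pointwise bound
    have hpt : ∀ ω, ‖U ω - V ω‖ + (1 / m) * ‖GU ω‖ + (1 / m) * ‖GV ω‖ ≤
        ‖wf - wg‖ + (1 + M / m) * φU ω + (1 + M / m) * φV ω
          + (1 / m) * ‖f' (U ω) - GU ω‖ + (1 / m) * ‖g' (V ω) - GV ω‖ := by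
      intro ω
      have t1 : ‖U ω - V ω‖ ≤ ‖U ω - wf‖ + ‖wf - wg‖ + ‖wg - V ω‖ := by
        have h := dist_triangle4 (U ω) wf wg (V ω)
        simpa [dist_eq_norm] using h
      have t1' : ‖wg - V ω‖ ≤ φV ω := by rw [norm_sub_rev]; exact hVwg ω
      have t2 : ‖GU ω‖ ≤ M * φU ω + ‖f' (U ω) - GU ω‖ := by
        calc ‖GU ω‖ = ‖f' (U ω) - (f' (U ω) - GU ω)‖ := by rw [sub_sub_cancel]
          _ ≤ ‖f' (U ω)‖ + ‖f' (U ω) - GU ω‖ := norm_sub_le _ _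
          _ ≤ M * φU ω + ‖f' (U ω) - GU ω‖ := by linarith [hfUb ω]
      have t3 : ‖GV ω‖ ≤ M * φV ω + ‖g' (V ω) - GV ω‖ := by
        calc ‖GV ω‖ = ‖g' (V ω) - (g' (V ω) - GV ω)‖ := by rw [sub_sub_cancel]
          _ ≤ ‖g' (V ω)‖ + ‖g' (V ω) - GV ω‖ := norm_sub_le _ _
          _ ≤ M * φV ω + ‖g' (V ω) - GV ω‖ := by linarith [hgVb ω]
      have hm' : (0:ℝ) ≤ 1 / m := by positivity
      have t2' := mul_le_mul_of_nonneg_left t2 hm'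
      have t3' := mul_le_mul_of_nonneg_left t3 hm'
      have e1 : (1 / m) * (M * φU ω + ‖f' (U ω) - GU ω‖)
          = (M / m) * φU ω + (1 / m) * ‖f' (U ω) - GU ω‖ := by ring
      have e2 : (1 / m) * (M * φV ω + ‖g' (V ω) - GV ω‖)
          = (M / m) * φV ω + (1 / m) * ‖g' (V ω) - GV ω‖ := by ring
      rw [e1] at t2'
      rw [e2] at t3'
      have := hUwf ω
      nlinarith [t1, t1', t2', t3']
    -- integrability
    have i1 : Integrable (fun ω => ‖wf - wg‖ + (1 + M / m) * φU ω) P :=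
      (integrable_const _).add (hφUint.const_mul _)
    have i2 : Integrable (fun ω => ‖wf - wg‖ + (1 + M / m) * φU ω
        + (1 + M / m) * φV ω) P := i1.add (hφVint.const_mul _)
    have i3 : Integrable (fun ω => ‖wf - wg‖ + (1 + M / m) * φU ω
        + (1 + M / m) * φV ω + (1 / m) * ‖f' (U ω) - GU ω‖) P :=
      i2.add (hdiffU.const_mul _)
    have i4 : Integrable (fun ω => ‖wf - wg‖ + (1 + M / m) * φU ω
        + (1 + M / m) * φV ω + (1 / m) * ‖f' (U ω) - GU ω‖
        + (1 / m) * ‖g' (V ω) - GV ω‖) P := i3.add (hdiffV.const_mul _)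
    have iL : Integrable (fun ω => ‖U ω - V ω‖ + (1 / m) * ‖GU ω‖
        + (1 / m) * ‖GV ω‖) P := (hUV.add (hGU.const_mul _)).add (hGV.const_mul _)
    have hmono := integral_mono iL i4 hpt
    have hRHSval : ∫ ω, (‖wf - wg‖ + (1 + M / m) * φU ω + (1 + M / m) * φV ω
        + (1 / m) * ‖f' (U ω) - GU ω‖ + (1 / m) * ‖g' (V ω) - GV ω‖) ∂P
        = ‖wf - wg‖ + (1 + M / m) * (∫ ω, φU ω ∂P) + (1 + M / m) * (∫ ω, φV ω ∂P)
          + (1 / m) * (∫ ω, ‖f' (U ω) - GU ω‖ ∂P)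
          + (1 / m) * (∫ ω, ‖g' (V ω) - GV ω‖ ∂P) := by
      rw [integral_add i3 (hdiffV.const_mul _), integral_add i2 (hdiffU.const_mul _),
        integral_add i1 (hφVint.const_mul _),
        integral_add (integrable_const _) (hφUint.const_mul _),
        integral_const, probReal_univ, MeasureTheory.integral_const_mul,
        MeasureTheory.integral_const_mul, MeasureTheory.integral_const_mul,
        MeasureTheory.integral_const_mul]
      simp
    rw [hRHSval] at hmono
    -- key coefficient inequality
    have hsm : 0 < Real.sqrt m := Real.sqrt_pos.mpr hm
    have hm32 : m ^ ((3 : ℝ) / 2) = m * Real.sqrt m := by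
      rw [show (3:ℝ)/2 = 1 + 1/2 by norm_num, Real.rpow_add hm, Real.rpow_one,
        Real.sqrt_eq_rpow]
    have key : (1 + M / m) * (Real.sqrt 2 / Real.sqrt m)
        ≤ 2 * Real.sqrt 2 * M / m ^ ((3 : ℝ) / 2) := by
      rw [hm32, show (1 + M / m) = (m + M) / m by field_simp, div_mul_div_comm,
        div_le_div_iff₀ (by positivity) (by positivity)]
      nlinarith [mul_le_mul_of_nonneg_right (show m + M ≤ 2 * M by linarith)
        (show (0:ℝ) ≤ Real.sqrt 2 * (m * Real.sqrt m) by positivity), hm, hsm]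
    have hcoef : (0:ℝ) ≤ 1 + M / m := by positivity
    have hφsum : (∫ ω, φU ω ∂P) + (∫ ω, φV ω ∂P)
        ≤ Real.sqrt 2 / Real.sqrt m * (Real.sqrt ε₁ + Real.sqrt ε₂) := by
      rw [mul_add]; exact add_le_add hφUbd hφVbd
    have hstep1 : (1 + M / m) * ((∫ ω, φU ω ∂P) + (∫ ω, φV ω ∂P))
        ≤ (2 * Real.sqrt 2 * M / m ^ ((3 : ℝ) / 2)) * (Real.sqrt ε₁ + Real.sqrt ε₂) := by
      calc (1 + M / m) * ((∫ ω, φU ω ∂P) + (∫ ω, φV ω ∂P))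
          ≤ (1 + M / m) * (Real.sqrt 2 / Real.sqrt m * (Real.sqrt ε₁ + Real.sqrt ε₂)) :=
            mul_le_mul_of_nonneg_left hφsum hcoef
        _ = (1 + M / m) * (Real.sqrt 2 / Real.sqrt m) * (Real.sqrt ε₁ + Real.sqrt ε₂) := by
            ring
        _ ≤ (2 * Real.sqrt 2 * M / m ^ ((3 : ℝ) / 2)) * (Real.sqrt ε₁ + Real.sqrt ε₂) :=
            mul_le_mul_of_nonneg_right key (by positivity)
    have hm' : (0:ℝ) ≤ 1 / m := by positivity
    have hD : (1 / m) * (∫ ω, ‖f' (U ω) - GU ω‖ ∂P)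
        + (1 / m) * (∫ ω, ‖g' (V ω) - GV ω‖ ∂P) ≤ (1 / m) * (D₁ + D₂) := by
      have := mul_le_mul_of_nonneg_left happroxU hm'
      have := mul_le_mul_of_nonneg_left happroxV hm'
      nlinarith [mul_le_mul_of_nonneg_left happroxU hm',
        mul_le_mul_of_nonneg_left happroxV hm']
    linarith [hmono, hstep1, hD]
end

section
/- Let H be a real Hilbert space, m > 0, M > 0, ρ ≥ 0, ε_t ≥ 0, and natural numbers t < n. For each i = t, …, n let w_i* ∈ H and suppose ‖w_i* − w_{i−1}*‖ ≤ ρ for i = t+1, …, n. Let f_t : H → ℝ be differentiable and m-strongly convex with ∇f_t(w_t*) = 0, and let f_n : H → ℝ be differentiable with M-Lipschitz gradient and ∇f_n(w_n*) = 0. Then for any point w ∈ H with f_t(w) − f_t(w_t*) ≤ ε_t, one has f_n(w) − f_n(w_n*) ≤ (M/2)(√(2ε_t/m) + (n − t)ρ)². -/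
lemma descent_lemma_aux
    {H : Type*} [NormedAddCommGroup H] [InnerProductSpace ℝ H] [CompleteSpace H]
    (M : ℝ) (f : H → ℝ) (f' : H → H)
    (hgrad : ∀ x, HasGradientAt f (f' x) x)
    (hlip : ∀ x y : H, ‖f' x - f' y‖ ≤ M * ‖x - y‖)
    (x y : H) (hx0 : f' x = 0) :
    f y ≤ f x + (M / 2) * ‖y - x‖ ^ 2 := by
  set v := y - x with hv
  have hline : ∀ s : ℝ, HasDerivAt (fun s : ℝ => x + s • v) v s := by
    intro s
    simpa using ((hasDerivAt_id s).smul_const v).const_add x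
  have hψ : ∀ s : ℝ, HasDerivAt (fun s => f (x + s • v) - (M / 2) * s ^ 2 * ‖v‖ ^ 2)
      ((inner ℝ (f' (x + s • v)) v : ℝ) - M * s * ‖v‖ ^ 2) s := by
    intro s
    have h1 : HasDerivAt (fun s : ℝ => f (x + s • v)) (inner ℝ (f' (x + s • v)) v : ℝ) s := by
      have := (hgrad (x + s • v)).hasFDerivAt.comp_hasDerivAt s (hline s)
      simp at this
      exact this
    have h2 : HasDerivAt (fun s : ℝ => (M / 2) * s ^ 2 * ‖v‖ ^ 2)
        (M * s * ‖v‖ ^ 2) s := by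
      have := (((hasDerivAt_pow 2 s).const_mul (M / 2)).mul_const (‖v‖ ^ 2))
      exact this.congr_deriv (by rw [show (2:ℕ) - 1 = 1 from rfl]; push_cast; ring)
    exact h1.sub h2
  have hanti : AntitoneOn (fun s => f (x + s • v) - (M / 2) * s ^ 2 * ‖v‖ ^ 2)
      (Set.Icc (0:ℝ) 1) := by
    apply antitoneOn_of_deriv_nonpos (convex_Icc 0 1)
    · exact fun s _ => ((hψ s).continuousAt).continuousWithinAt
    · intro s hs
      exact ((hψ s).differentiableAt).differentiableWithinAt
    · intro s hs
      rw [interior_Icc] at hs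
      rw [(hψ s).deriv]
      have hineq : (inner ℝ (f' (x + s • v)) v : ℝ) ≤ M * s * ‖v‖ ^ 2 := by
        calc (inner ℝ (f' (x + s • v)) v : ℝ)
            = (inner ℝ (f' (x + s • v) - f' x) v : ℝ) := by rw [hx0]; simp
          _ ≤ ‖f' (x + s • v) - f' x‖ * ‖v‖ := real_inner_le_norm _ _
          _ ≤ (M * ‖(x + s • v) - x‖) * ‖v‖ := by
              gcongr; exact hlip _ _
          _ = M * s * ‖v‖ ^ 2 := by
              simp [norm_smul, abs_of_pos hs.1]; ring
      linarith
  have h01 := hanti (Set.left_mem_Icc.2 zero_le_one) (Set.right_mem_Icc.2 zero_le_one)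
    zero_le_one
  simp only [zero_smul, add_zero, one_smul, one_pow] at h01
  have hxy : x + v = y := by rw [hv]; abel
  rw [hxy] at h01
  linarith


/-- Excess-risk propagation when no samples are taken between time `t` and
time `n`: if `f_t` is `m`-strongly convex with minimizer `w_t*`, `f_n` has `M`-Lipschitz
gradient with critical point `w_n*`, the minimizers move by at most `ρ` per step, and
`f_t(w) − f_t(w_t*) ≤ ε_t`, then `f_n(w) − f_n(w_n*) ≤ (M/2)(√(2ε_t/m) + (n − t)ρ)²`. -/
theorem excess_risk_propagation_no_samples
    {H : Type*} [NormedAddCommGroup H] [InnerProductSpace ℝ H] [CompleteSpace H]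
    (m M ρ εt : ℝ) (hm : 0 < m) (hM : 0 < M) (hρ : 0 ≤ ρ) (hεt : 0 ≤ εt)
    (t n : ℕ) (htn : t < n) (wstar : ℕ → H)
    (hstep : ∀ i, t + 1 ≤ i → i ≤ n → ‖wstar i - wstar (i - 1)‖ ≤ ρ)
    (ft : H → ℝ) (ft' : H → H)
    (hgradt : ∀ x, HasGradientAt ft (ft' x) x)
    (hsct : ∀ x y : H, ft x + (inner ℝ (ft' x) (y - x) : ℝ) + (m / 2) * ‖y - x‖ ^ 2 ≤ ft y)
    (hmint : ft' (wstar t) = 0)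
    (fn : H → ℝ) (fn' : H → H)
    (hgradn : ∀ x, HasGradientAt fn (fn' x) x)
    (hlipn : ∀ x y : H, ‖fn' x - fn' y‖ ≤ M * ‖x - y‖)
    (hminn : fn' (wstar n) = 0)
    (w : H) (hw : ft w - ft (wstar t) ≤ εt) :
    fn w - fn (wstar n) ≤
      (M / 2) * (Real.sqrt (2 * εt / m) + ((n : ℝ) - (t : ℝ)) * ρ) ^ 2 := by
  -- Step 1: ‖w - wstar t‖ ≤ √(2εt/m)
  have hsc := hsct (wstar t) w
  rw [hmint] at hsc
  simp only [inner_zero_left, add_zero] at hsc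
  have h1 : ‖w - wstar t‖ ≤ Real.sqrt (2 * εt / m) := by
    rw [Real.le_sqrt (norm_nonneg _) (by positivity)]
    rw [le_div_iff₀ hm]
    nlinarith
  -- Step 2: telescoping bound on minimizer drift
  have htel : ∀ k, t ≤ k → k ≤ n → ‖wstar k - wstar t‖ ≤ ((k : ℝ) - (t : ℝ)) * ρ := by
    intro k hk
    induction k, hk using Nat.le_induction with
    | base => intro _; simp
    | succ k hk ih =>
      intro hkn
      have ih' := ih (le_of_lt (Nat.lt_of_succ_le hkn))
      have hs := hstep (k + 1) (by omega) hkn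
      simp only [Nat.add_sub_cancel] at hs
      calc ‖wstar (k + 1) - wstar t‖
          ≤ ‖wstar (k + 1) - wstar k‖ + ‖wstar k - wstar t‖ := by
            have : wstar (k + 1) - wstar t = (wstar (k + 1) - wstar k) + (wstar k - wstar t) := by
              abel
            rw [this]; exact norm_add_le _ _
        _ ≤ ρ + ((k : ℝ) - (t : ℝ)) * ρ := add_le_add hs ih'
        _ = (((k : ℕ) + 1 : ℝ) - (t : ℝ)) * ρ := by ring
        _ = (((k + 1 : ℕ) : ℝ) - (t : ℝ)) * ρ := by push_cast; ring
  have h2 := htel n (le_of_lt htn) le_rfl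
  -- Step 3: combine
  have h3 : ‖w - wstar n‖ ≤ Real.sqrt (2 * εt / m) + ((n : ℝ) - (t : ℝ)) * ρ := by
    calc ‖w - wstar n‖ ≤ ‖w - wstar t‖ + ‖wstar n - wstar t‖ := by
          have : w - wstar n = (w - wstar t) - (wstar n - wstar t) := by abel
          rw [this]; exact norm_sub_le _ _
      _ ≤ _ := add_le_add h1 h2
  -- Step 4: descent lemma
  have h4 := descent_lemma_aux M fn fn' hgradn hlipn (wstar n) w hminn
  have h5 : ‖w - wstar n‖ ^ 2 ≤ (Real.sqrt (2 * εt / m) + ((n : ℝ) - (t : ℝ)) * ρ) ^ 2 := by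
    apply pow_le_pow_left₀ (norm_nonneg _) h3
  nlinarith [h4, h5]
end
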